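/- Let Φ : [0, R) → ℝ be strictly increasing with 𝒢(z) = Φ(z·𝒢(z)) on [0,R), where 𝒢 is the return probability generating function with radius of convergence considerations making z ↦ z𝒢(z) a valid change of variables. Then ∫₀¹ (𝒢(z)-1)/z dz = ∫₀^{𝒢(1)} (Φ(t)-1)/t dt - 𝒢(1) + 1 + log 𝒢(1). -/

import Mathlib

open MeasureTheory Set Filter Topology


/-- Proposition: let `𝒢(z) = ∑_{k≥0} p_k z^k` with `p_0 = 1`, `p_k ≥ 0`, summable at `z = 1`,
and let `Φ` be a continuously differentiable strictly increasing function satisfying the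
functional equation `𝒢(z) = Φ(z·𝒢(z))` on `[0,1]`. Then
`∫₀¹ (𝒢(z)-1)/z dz = ∫₀^{𝒢(1)} (Φ(t)-1)/t dt - 𝒢(1) + 1 + log 𝒢(1)`. -/
theorem stmt11 (p : ℕ → ℝ) (hp0 : p 0 = 1) (hnn : ∀ k, 0 ≤ p k) (hsum : Summable p)
    (G : ℝ → ℝ) (hGdef : ∀ z : ℝ, G z = ∑' k : ℕ, p k * z ^ k)
    (Φ : ℝ → ℝ) (hmono : StrictMono Φ) (hC1 : ContDiff ℝ 1 Φ)
    (hfe : ∀ z ∈ Set.Icc (0 : ℝ) 1, G z = Φ (z * G z)) :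
    ∫ z in (0 : ℝ)..1, (G z - 1) / z =
      (∫ t in (0 : ℝ)..(G 1), (Φ t - 1) / t) - G 1 + 1 + Real.log (G 1) := by
  have hGfun : G = fun z => ∑' k : ℕ, p k * z ^ k := funext hGdef
  -- bound on terms
  have hb : ∀ z ∈ Icc (0:ℝ) 1, ∀ k : ℕ, ‖p k * z ^ k‖ ≤ p k := by
    intro z hz k
    rw [Real.norm_eq_abs, abs_of_nonneg (mul_nonneg (hnn k) (pow_nonneg hz.1 k))]
    nlinarith [pow_le_one₀ hz.1 hz.2 (n := k), hnn k, pow_nonneg hz.1 k]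
  have hsumz : ∀ z ∈ Icc (0:ℝ) 1, Summable fun k : ℕ => p k * z ^ k := by
    intro z hz
    exact Summable.of_norm_bounded hsum (hb z hz)
  have hGcont : ContinuousOn G (Icc 0 1) := by
    rw [hGfun]
    exact continuousOn_tsum
      (fun k => (continuous_const.mul (continuous_pow k)).continuousOn) hsum
      (fun k z hz => hb z hz k)
  have hGone : ∀ z ∈ Icc (0:ℝ) 1, 1 ≤ G z := by
    intro z hz
    rw [hGdef]
    have h := Summable.le_tsum (hsumz z hz) 0
      (fun k _ => mul_nonneg (hnn k) (pow_nonneg hz.1 k))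
    simpa [hp0] using h
  have hG0 : G 0 = 1 := by
    rw [hGdef]
    rw [tsum_eq_single 0 (by intro k hk; simp [zero_pow hk])]
    simp [hp0]
  have hΦ0 : Φ 0 = 1 := by
    have h := hfe 0 (by constructor <;> norm_num)
    rw [hG0] at h
    simpa using h.symm
  -- the function Ψ
  set Ψ : ℝ → ℝ := fun t => if t = 0 then deriv Φ 0 else (Φ t - 1) / t with hΨdef
  have hΦc : Continuous Φ := hC1.continuous
  have hΨcont : Continuous Ψ := by
    rw [continuous_iff_continuousAt]
    intro t
    rcases eq_or_ne t 0 with rfl | ht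
    · have hd : HasDerivAt Φ (deriv Φ 0) 0 := (hC1.differentiable one_ne_zero 0).hasDerivAt
      rw [hasDerivAt_iff_tendsto_slope] at hd
      have heq : ∀ᶠ s in 𝓝[≠] (0:ℝ), slope Φ 0 s = Ψ s := by
        filter_upwards [self_mem_nhdsWithin] with s hs
        simp only [mem_compl_iff, mem_singleton_iff] at hs
        simp [Ψ, slope, hs, hΦ0, div_eq_inv_mul]
      have h1 : Tendsto Ψ (𝓝[≠] (0:ℝ)) (𝓝 (Ψ 0)) := by
        have := hd.congr' heq
        simpa [Ψ] using this
      have h2 : Tendsto Ψ (pure (0:ℝ)) (𝓝 (Ψ 0)) := tendsto_pure_nhds Ψ 0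
      unfold ContinuousAt
      rw [← nhdsNE_sup_pure, tendsto_sup]
      exact ⟨h1, h2⟩
    · have hev : (fun s => (Φ s - 1) / s) =ᶠ[𝓝 t] Ψ := by
        filter_upwards [isOpen_ne.mem_nhds ht] with s hs
        simp [Ψ, hs]
      exact ContinuousAt.congr
        (((hΦc.continuousAt.sub continuousAt_const).div continuousAt_id ht)) hev
  -- F
  set F : ℝ → ℝ := fun t => ∫ s in (0:ℝ)..t, Ψ s with hF
  have hFderiv : ∀ t : ℝ, HasDerivAt F (Ψ t) t := fun t =>
    intervalIntegral.integral_hasDerivAt_right (hΨcont.intervalIntegrable 0 t)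
      (hΨcont.aestronglyMeasurable.stronglyMeasurableAtFilter) hΨcont.continuousAt
  have hFcont : Continuous F :=
    continuous_iff_continuousAt.mpr fun t => (hFderiv t).continuousAt
  -- derivative of G on (0,1)
  obtain ⟨C, hCbd⟩ := (hsum.tendsto_atTop_zero.bddAbove_range)
  have hCle : ∀ k, p k ≤ C := fun k => hCbd ⟨k, rfl⟩
  have hGderiv : ∀ z ∈ Ioo (0:ℝ) 1,
      HasDerivAt G (∑' k : ℕ, p k * (k * z ^ (k - 1))) z := by
    intro z hz
    set r : ℝ := (z + 1) / 2 with hr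
    have hzr : z < r := by rw [hr]; linarith [hz.2]
    have hr1 : r < 1 := by rw [hr]; linarith [hz.2]
    have hr0 : 0 < r := by rw [hr]; linarith [hz.1]
    have hu : Summable (fun k : ℕ => C * (k * r ^ (k - 1))) := by
      have h1 : Summable (fun k : ℕ => (C / r) * ((k:ℝ) ^ 1 * r ^ k)) :=
        (summable_pow_mul_geometric_of_norm_lt_one (R := ℝ) 1 (r := r)
          (by rw [Real.norm_eq_abs, abs_of_pos hr0]; exact hr1)).mul_left _
      apply h1.congr
      intro k
      cases k with
      | zero => simp
      | succ n =>
        have : (n + 1 : ℕ) - 1 = n := rfl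
        rw [this]
        rw [pow_succ]
        field_simp
        ring
    rw [hGfun]
    exact hasDerivAt_tsum_of_isPreconnected hu (isOpen_Ioo (a := -r) (b := r))
      (isPreconnected_Ioo)
      (fun k y _ => (hasDerivAt_pow k y).const_mul (p k))
      (fun k y hy => by
        rw [Real.norm_eq_abs, abs_mul, abs_mul, abs_pow]
        have h1 : |y| ≤ r := by
          rw [abs_le]; exact ⟨hy.1.le, hy.2.le⟩
        have h2 : |y| ^ (k - 1) ≤ r ^ (k - 1) := pow_le_pow_left₀ (abs_nonneg y) h1 _
        have h3 : |p k| = p k := abs_of_nonneg (hnn k)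
        have h4 : |(k:ℝ)| = (k:ℝ) := abs_of_nonneg (Nat.cast_nonneg k)
        rw [h3, h4]
        have := mul_le_mul_of_nonneg_left h2 (Nat.cast_nonneg (α := ℝ) k)
        calc p k * ((k:ℝ) * |y| ^ (k - 1)) ≤ C * ((k:ℝ) * |y| ^ (k-1)) := by
              apply mul_le_mul_of_nonneg_right (hCle k)
              positivity
          _ ≤ C * ((k:ℝ) * r ^ (k-1)) := by
              apply mul_le_mul_of_nonneg_left this
              have := (hnn 0).trans (hCle 0)
              linarith
      )
      (show (0:ℝ) ∈ Ioo (-r) r from ⟨by linarith, hr0⟩)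
      (by simpa using hsumz 0 ⟨le_rfl, zero_le_one⟩)
      (⟨by linarith [hz.1], hzr⟩)
  -- H and its derivative
  set H : ℝ → ℝ := fun z => F (z * G z) - G z + Real.log (G z) with hH
  have hHderiv : ∀ z ∈ Ioo (0:ℝ) 1, HasDerivAt H ((G z - 1) / z) z := by
    intro z hz
    have hzI : z ∈ Icc (0:ℝ) 1 := ⟨hz.1.le, hz.2.le⟩
    have hG1 : 1 ≤ G z := hGone z hzI
    have hGpos : 0 < G z := lt_of_lt_of_le one_pos hG1
    set D : ℝ := ∑' k : ℕ, p k * (k * z ^ (k - 1)) with hD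
    have hDG : HasDerivAt G D z := hGderiv z hz
    have h1 : HasDerivAt (fun z => z * G z) (1 * G z + z * D) z :=
      (hasDerivAt_id z).mul hDG
    have h2 : HasDerivAt (fun z => F (z * G z)) (Ψ (z * G z) * (1 * G z + z * D)) z :=
      by have := (hFderiv (z * G z)).comp z h1; exact this
    have h3 : HasDerivAt (fun z => Real.log (G z)) ((G z)⁻¹ * D) z := by
      exact (Real.hasDerivAt_log (ne_of_gt hGpos)).comp z hDG
    have h4 := (h2.sub hDG).add h3
    convert h4 using 1
    case e'_4 => rfl
    case e'_5 => rfl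
    case e'_8 => rfl
    have hzG : z * G z ≠ 0 := ne_of_gt (mul_pos hz.1 hGpos)
    have hΨval : Ψ (z * G z) = (G z - 1) / (z * G z) := by
      rw [hΨdef]
      simp only [if_neg hzG]
      rw [← hfe z hzI]
    rw [hΨval]
    have hz0 : z ≠ 0 := ne_of_gt hz.1
    field_simp
    ring
  have hHcont : ContinuousOn H (Icc 0 1) := by
    have hne : ∀ z ∈ Icc (0:ℝ) 1, G z ≠ 0 := fun z hz =>
      ne_of_gt (lt_of_lt_of_le one_pos (hGone z hz))
    exact ((hFcont.comp_continuousOn (continuousOn_id.mul hGcont)).sub hGcont).add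
      (hGcont.log hne)
  -- integrability
  set g : ℝ → ℝ := fun z => ∑' k : ℕ, p (k + 1) * z ^ k with hg
  have hsum' : Summable fun k => p (k + 1) := (summable_nat_add_iff 1).mpr hsum
  have hgcont : ContinuousOn g (Icc 0 1) := by
    rw [hg]
    exact continuousOn_tsum
      (fun k => (continuous_const.mul (continuous_pow k)).continuousOn) hsum'
      (fun k z hz => by
        rw [Real.norm_eq_abs, abs_of_nonneg (mul_nonneg (hnn _) (pow_nonneg hz.1 k))]
        nlinarith [pow_le_one₀ hz.1 hz.2 (n := k), hnn (k+1), pow_nonneg hz.1 k])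
  have hgeq : ∀ z ∈ Ioc (0:ℝ) 1, (G z - 1) / z = g z := by
    intro z hz
    have hzI : z ∈ Icc (0:ℝ) 1 := ⟨hz.1.le, hz.2⟩
    have hGz : G z = 1 + z * g z := by
      rw [hGdef, Summable.tsum_eq_zero_add (hsumz z hzI)]
      simp only [hp0, pow_zero, mul_one]
      congr 1
      rw [hg, ← tsum_mul_left]
      apply tsum_congr
      intro k
      rw [pow_succ]
      ring
    rw [hGz]
    have hz0 : z ≠ 0 := ne_of_gt hz.1
    field_simp
    ring
  have hint : IntervalIntegrable (fun z => (G z - 1) / z) volume 0 1 := by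
    rw [intervalIntegrable_iff, uIoc_of_le zero_le_one]
    have hgint : IntegrableOn g (Ioc 0 1) volume :=
      (hgcont.integrableOn_compact isCompact_Icc).mono_set Ioc_subset_Icc_self
    exact IntegrableOn.congr_fun hgint (fun z hz => (hgeq z hz).symm) measurableSet_Ioc
  -- FTC
  have hFTC : ∫ z in (0:ℝ)..1, (G z - 1) / z = H 1 - H 0 :=
    intervalIntegral.integral_eq_sub_of_hasDerivAt_of_le zero_le_one hHcont hHderiv hint
  have hH1 : H 1 = F (G 1) - G 1 + Real.log (G 1) := by rw [hH]; simp
  have hH0 : H 0 = -1 := by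
    rw [hH]
    simp [hG0, F, intervalIntegral.integral_same]
  have hFG1 : F (G 1) = ∫ t in (0:ℝ)..(G 1), (Φ t - 1) / t := by
    rw [hF]
    apply intervalIntegral.integral_congr_ae
    have h0 : ∀ᵐ x : ℝ ∂volume, x ≠ 0 := by
      rw [ae_iff]
      have hset : {x : ℝ | ¬ x ≠ 0} = {0} := by ext x; simp
      rw [hset, Real.volume_singleton]
    filter_upwards [h0] with x hx _
    simp [Ψ, hx]
  rw [hFTC, hH1, hH0, hFG1]
  ring
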